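/- arXiv:2508.02077 — 2 statements merged into one kernel-verified Lean document; each statement's English description precedes it below -/
import Mathlib

section
/- For any f, g ∈ L^p(Ω)^d with p ∈ (1,∞), the monotonicity inequality ∫_Ω (|f|^{p−2}f − |g|^{p−2}g) · (f − g) dx ≥ (‖f‖_{L^p(Ω)}^{p−1} − ‖g‖_{L^p(Ω)}^{p−1}) (‖f‖_{L^p(Ω)} − ‖g‖_{L^p(Ω)}) ≥ 0 holds. -/
open MeasureTheory Filter Topology
open scoped ENNReal RealInnerProductSpace

noncomputable section

/-- `d`-dimensional Euclidean space. -/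
abbrev Euc (d : ℕ) : Type := EuclideanSpace ℝ (Fin d)

lemma aux_rpow {t : ℝ} (ht : 0 ≤ t) {s : ℝ} (hs : s + 1 ≠ 0) : t ^ s * t = t ^ (s + 1) := by
  rcases ht.eq_or_lt with h | h
  · rw [← h]; simp [Real.zero_rpow hs]
  · rw [Real.rpow_add_one h.ne']

lemma aux_key {d : ℕ} {p : ℝ} (hp : 1 < p) (u v : Euc d) :
    ‖u‖^p + ‖v‖^p - ‖u‖^(p-1)*‖v‖ - ‖v‖^(p-1)*‖u‖
      ≤ ⟪(‖u‖ ^ (p - 2)) • u - (‖v‖ ^ (p - 2)) • v, u - v⟫ := by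
  have hp1 : p - 2 + 1 ≠ 0 := by intro h; nlinarith
  have hp2 : p - 2 + 1 + 1 ≠ 0 := by intro h; nlinarith
  have e1 : p - 2 + 1 = p - 1 := by ring
  have e2 : p - 2 + 1 + 1 = p := by ring
  have ha : (0:ℝ) ≤ ‖u‖ ^ (p-2) := Real.rpow_nonneg (norm_nonneg _) _
  have hb : (0:ℝ) ≤ ‖v‖ ^ (p-2) := Real.rpow_nonneg (norm_nonneg _) _
  have hu2 : ‖u‖ ^ (p-2) * (‖u‖*‖u‖) = ‖u‖ ^ p := by
    rw [← mul_assoc, aux_rpow (norm_nonneg _) hp1, aux_rpow (norm_nonneg _) hp2, e2]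
  have hv2 : ‖v‖ ^ (p-2) * (‖v‖*‖v‖) = ‖v‖ ^ p := by
    rw [← mul_assoc, aux_rpow (norm_nonneg _) hp1, aux_rpow (norm_nonneg _) hp2, e2]
  have h1 : ‖u‖ ^ (p-2) * ⟪u, v⟫ ≤ ‖u‖^(p-1)*‖v‖ := by
    calc ‖u‖ ^ (p-2) * ⟪u, v⟫ ≤ ‖u‖ ^ (p-2) * (‖u‖*‖v‖) :=
          mul_le_mul_of_nonneg_left (real_inner_le_norm u v) ha
      _ = ‖u‖^(p-1)*‖v‖ := by rw [← mul_assoc, aux_rpow (norm_nonneg _) hp1, e1]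
  have h2 : ‖v‖ ^ (p-2) * ⟪u, v⟫ ≤ ‖v‖^(p-1)*‖u‖ := by
    calc ‖v‖ ^ (p-2) * ⟪u, v⟫ ≤ ‖v‖ ^ (p-2) * (‖v‖*‖u‖) := by
          refine mul_le_mul_of_nonneg_left ?_ hb
          rw [mul_comm]; exact real_inner_le_norm u v
      _ = ‖v‖^(p-1)*‖u‖ := by rw [← mul_assoc, aux_rpow (norm_nonneg _) hp1, e1]
  have expand : ⟪(‖u‖ ^ (p - 2)) • u - (‖v‖ ^ (p - 2)) • v, u - v⟫
      = ‖u‖ ^ (p-2) * (‖u‖*‖u‖) + ‖v‖ ^ (p-2) * (‖v‖*‖v‖)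
        - ‖u‖ ^ (p-2) * ⟪u,v⟫ - ‖v‖ ^ (p-2) * ⟪u,v⟫ := by
    rw [inner_sub_left, inner_sub_right, inner_sub_right, real_inner_smul_left,
      real_inner_smul_left, real_inner_smul_left, real_inner_smul_left,
      real_inner_self_eq_norm_mul_norm, real_inner_self_eq_norm_mul_norm,
      real_inner_comm v u]
    ring
  rw [expand]
  linarith

lemma aux_dom {d : ℕ} {p : ℝ} (hp : 1 < p) (u v : Euc d) :
    ‖⟪(‖u‖ ^ (p - 2)) • u - (‖v‖ ^ (p - 2)) • v, u - v⟫‖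
      ≤ ‖u‖^p + ‖v‖^p + (‖u‖^(p-1)*‖v‖ + ‖v‖^(p-1)*‖u‖) := by
  have hp1 : p - 2 + 1 ≠ 0 := by intro h; nlinarith
  have hp2 : p - 1 + 1 ≠ 0 := by intro h; nlinarith
  have e1 : p - 2 + 1 = p - 1 := by ring
  have e2 : p - 1 + 1 = p := by ring
  have ha : (0:ℝ) ≤ ‖u‖ ^ (p-2) := Real.rpow_nonneg (norm_nonneg _) _
  have hb : (0:ℝ) ≤ ‖v‖ ^ (p-2) := Real.rpow_nonneg (norm_nonneg _) _
  have hF1 : ‖(‖u‖ ^ (p - 2)) • u - (‖v‖ ^ (p - 2)) • v‖ ≤ ‖u‖^(p-1) + ‖v‖^(p-1) := by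
    refine (norm_sub_le _ _).trans ?_
    rw [norm_smul, norm_smul, Real.norm_of_nonneg ha, Real.norm_of_nonneg hb,
      aux_rpow (norm_nonneg _) hp1, aux_rpow (norm_nonneg _) hp1, e1]
  have hF2 : ‖u - v‖ ≤ ‖u‖ + ‖v‖ := norm_sub_le _ _
  calc ‖⟪(‖u‖ ^ (p - 2)) • u - (‖v‖ ^ (p - 2)) • v, u - v⟫‖
      ≤ ‖(‖u‖ ^ (p - 2)) • u - (‖v‖ ^ (p - 2)) • v‖ * ‖u - v‖ := norm_inner_le_norm _ _
    _ ≤ (‖u‖^(p-1) + ‖v‖^(p-1)) * (‖u‖ + ‖v‖) :=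
        mul_le_mul hF1 hF2 (norm_nonneg _) (by positivity)
    _ = ‖u‖^(p-1)*‖u‖ + ‖v‖^(p-1)*‖v‖ + (‖u‖^(p-1)*‖v‖ + ‖v‖^(p-1)*‖u‖) := by ring
    _ = ‖u‖^p + ‖v‖^p + (‖u‖^(p-1)*‖v‖ + ‖v‖^(p-1)*‖u‖) := by
        rw [aux_rpow (norm_nonneg _) hp2, aux_rpow (norm_nonneg _) hp2, e2]

/-- **monotonicity inequality.** For any `f, g ∈ L^p(Ω)^d` with
`p ∈ (1,∞)`,
`∫_Ω (|f|^{p−2}f − |g|^{p−2}g) · (f − g) dx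
  ≥ (‖f‖_{L^p}^{p−1} − ‖g‖_{L^p}^{p−1}) (‖f‖_{L^p} − ‖g‖_{L^p}) ≥ 0`. -/
theorem stmt9 {d : ℕ} {p : ℝ} (hp : 1 < p)
    (Ω : Set (Euc d)) (hΩo : IsOpen Ω) (hΩb : Bornology.IsBounded Ω)
    (f g : Euc d → Euc d)
    (hf : MemLp f (ENNReal.ofReal p) (volume.restrict Ω))
    (hg : MemLp g (ENNReal.ofReal p) (volume.restrict Ω)) :
    (((∫ x in Ω, ‖f x‖ ^ p) ^ p⁻¹) ^ (p - 1) - ((∫ x in Ω, ‖g x‖ ^ p) ^ p⁻¹) ^ (p - 1))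
        * ((∫ x in Ω, ‖f x‖ ^ p) ^ p⁻¹ - (∫ x in Ω, ‖g x‖ ^ p) ^ p⁻¹)
      ≤ ∫ x in Ω,
          ⟪(‖f x‖ ^ (p - 2)) • f x - (‖g x‖ ^ (p - 2)) • g x, f x - g x⟫ ∧
    0 ≤ (((∫ x in Ω, ‖f x‖ ^ p) ^ p⁻¹) ^ (p - 1)
          - ((∫ x in Ω, ‖g x‖ ^ p) ^ p⁻¹) ^ (p - 1))
        * ((∫ x in Ω, ‖f x‖ ^ p) ^ p⁻¹ - (∫ x in Ω, ‖g x‖ ^ p) ^ p⁻¹) := by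
  have hp0 : (0:ℝ) < p := by linarith
  have hps : (0:ℝ) < p - 1 := by linarith
  set μ := volume.restrict Ω with hμ
  have hpq : p.HolderConjugate (p/(p-1)) := Real.HolderConjugate.conjExponent hp
  -- integrability of ‖f‖^p, ‖g‖^p
  have hIf : Integrable (fun x => ‖f x‖^p) μ := by
    have := hf.norm_rpow (by simpa using hp0) ENNReal.ofReal_ne_top
    rw [ENNReal.toReal_ofReal hp0.le] at this
    exact memLp_one_iff_integrable.mp this
  have hIg : Integrable (fun x => ‖g x‖^p) μ := by
    have := hg.norm_rpow (by simpa using hp0) ENNReal.ofReal_ne_top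
    rw [ENNReal.toReal_ofReal hp0.le] at this
    exact memLp_one_iff_integrable.mp this
  -- integrability of the cross products, via Young's inequality
  have hprod : ∀ (F G : Euc d → Euc d), MemLp F (ENNReal.ofReal p) μ →
      MemLp G (ENNReal.ofReal p) μ →
      Integrable (fun x => ‖F x‖^(p-1) * ‖G x‖) μ := by
    intro F G hF hG
    have hIF : Integrable (fun x => ‖F x‖^p) μ := by
      have := hF.norm_rpow (by simpa using hp0) ENNReal.ofReal_ne_top
      rw [ENNReal.toReal_ofReal hp0.le] at this
      exact memLp_one_iff_integrable.mp this
    have hIG : Integrable (fun x => ‖G x‖^p) μ := by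
      have := hG.norm_rpow (by simpa using hp0) ENNReal.ofReal_ne_top
      rw [ENNReal.toReal_ofReal hp0.le] at this
      exact memLp_one_iff_integrable.mp this
    refine Integrable.mono' (hIF.add hIG) ?_ (Eventually.of_forall fun x => ?_)
    · exact ((hF.1.norm.aemeasurable.pow aemeasurable_const).mul
        hG.1.norm.aemeasurable).aestronglyMeasurable
    · have h1 : (0:ℝ) ≤ ‖F x‖^(p-1) := Real.rpow_nonneg (norm_nonneg _) _
      rw [Real.norm_of_nonneg (mul_nonneg h1 (norm_nonneg (G x)))]
      have hy := Real.young_inequality_of_nonneg h1 (norm_nonneg (G x)) hpq.symm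
      rw [← Real.rpow_mul (norm_nonneg _), hpq.sub_one_mul_conj] at hy
      have d1 : ‖F x‖ ^ p / (p/(p-1)) ≤ ‖F x‖ ^ p :=
        div_le_self (Real.rpow_nonneg (norm_nonneg _) _) hpq.symm.lt.le
      have d2 : ‖G x‖ ^ p / p ≤ ‖G x‖ ^ p :=
        div_le_self (Real.rpow_nonneg (norm_nonneg _) _) hp.le
      calc ‖F x‖^(p-1) * ‖G x‖ ≤ ‖F x‖ ^ p / (p/(p-1)) + ‖G x‖ ^ p / p := hy
        _ ≤ ‖F x‖ ^ p + ‖G x‖ ^ p := add_le_add d1 d2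
  have hPfg : Integrable (fun x => ‖f x‖^(p-1) * ‖g x‖) μ := hprod f g hf hg
  have hPgf : Integrable (fun x => ‖g x‖^(p-1) * ‖f x‖) μ := hprod g f hg hf
  -- integrability of the inner-product integrand
  have hInner : Integrable
      (fun x => ⟪(‖f x‖ ^ (p - 2)) • f x - (‖g x‖ ^ (p - 2)) • g x, f x - g x⟫) μ := by
    refine Integrable.mono' ((hIf.add hIg).add (hPfg.add hPgf)) ?_
      (Eventually.of_forall fun x => ?_)
    · exact AEStronglyMeasurable.inner
        (((hf.1.norm.aemeasurable.pow aemeasurable_const).aestronglyMeasurable.smul hf.1).sub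
          ((hg.1.norm.aemeasurable.pow aemeasurable_const).aestronglyMeasurable.smul hg.1))
        (hf.1.sub hg.1)
    · exact aux_dom hp (f x) (g x)
  -- lower bound on the integral via the pointwise inequality
  have hmono : ∫ x, (‖f x‖^p + ‖g x‖^p - ‖f x‖^(p-1)*‖g x‖ - ‖g x‖^(p-1)*‖f x‖) ∂μ
      ≤ ∫ x in Ω, ⟪(‖f x‖ ^ (p - 2)) • f x - (‖g x‖ ^ (p - 2)) • g x, f x - g x⟫ := by
    refine integral_mono_ae (((hIf.add hIg).sub hPfg).sub hPgf : Integrable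
        (fun x => ‖f x‖^p + ‖g x‖^p - ‖f x‖^(p-1)*‖g x‖ - ‖g x‖^(p-1)*‖f x‖) μ) hInner
      (Eventually.of_forall fun x => ?_)
    have := aux_key hp (f x) (g x)
    simpa using this
  have hI1 : Integrable (fun x => ‖f x‖^p + ‖g x‖^p) μ := hIf.add hIg
  have hI2 : Integrable (fun x => ‖f x‖^p + ‖g x‖^p - ‖f x‖^(p-1)*‖g x‖) μ := hI1.sub hPfg
  rw [integral_sub hI2 hPgf, integral_sub hI1 hPfg, integral_add hIf hIg] at hmono
  -- Hölder's inequality for the cross terms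
  have hholder : ∀ (F G : Euc d → Euc d), MemLp F (ENNReal.ofReal p) μ →
      MemLp G (ENNReal.ofReal p) μ →
      ∫ x, ‖F x‖^(p-1) * ‖G x‖ ∂μ
        ≤ ((∫ x, ‖F x‖ ^ p ∂μ) ^ p⁻¹) ^ (p-1) * (∫ x, ‖G x‖ ^ p ∂μ) ^ p⁻¹ := by
    intro F G hF hG
    have hF1 : MemLp (fun x => ‖F x‖^(p-1)) (ENNReal.ofReal (p/(p-1))) μ := by
      have := hF.norm_rpow_div (ENNReal.ofReal (p-1))
      rw [ENNReal.toReal_ofReal hps.le, ← ENNReal.ofReal_div_of_pos hps] at this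
      exact this
    have h := integral_mul_le_Lp_mul_Lq_of_nonneg hpq.symm
      (Eventually.of_forall fun x => Real.rpow_nonneg (norm_nonneg (F x)) _)
      (Eventually.of_forall fun x => norm_nonneg (G x)) hF1 hG.norm
    have hpt : ∀ a, ((‖F a‖:ℝ)^(p-1)) ^ (p/(p-1)) = ‖F a‖ ^ p := fun a => by
      rw [← Real.rpow_mul (norm_nonneg _), hpq.sub_one_mul_conj]
    simp only [hpt] at h
    have hFnn : (0:ℝ) ≤ ∫ x, ‖F x‖ ^ p ∂μ :=
      integral_nonneg fun x => Real.rpow_nonneg (norm_nonneg _) _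
    rwa [show (1:ℝ)/(p/(p-1)) = p⁻¹*(p-1) by rw [one_div_div]; ring,
      Real.rpow_mul hFnn, one_div] at h
  have h1 := hholder f g hf hg
  have h2 := hholder g f hg hf
  -- nonnegativity facts and algebra
  have hFnn : (0:ℝ) ≤ ∫ x in Ω, ‖f x‖ ^ p :=
    integral_nonneg fun x => Real.rpow_nonneg (norm_nonneg _) _
  have hGnn : (0:ℝ) ≤ ∫ x in Ω, ‖g x‖ ^ p :=
    integral_nonneg fun x => Real.rpow_nonneg (norm_nonneg _) _
  have hsum : p⁻¹*(p-1) + p⁻¹ = 1 := by field_simp; ring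
  have hApow : ∀ (I : ℝ), 0 ≤ I → (I ^ p⁻¹) ^ (p-1) * I ^ p⁻¹ = I := by
    intro I hI
    rw [← Real.rpow_mul hI, ← Real.rpow_add' hI (by rw [hsum]; exact one_ne_zero), hsum,
      Real.rpow_one]
  have hA := hApow _ hFnn
  have hB := hApow _ hGnn
  set A := (∫ x in Ω, ‖f x‖ ^ p) ^ p⁻¹ with hAdef
  set B := (∫ x in Ω, ‖g x‖ ^ p) ^ p⁻¹ with hBdef
  have hA0 : 0 ≤ A := Real.rpow_nonneg hFnn _
  have hB0 : 0 ≤ B := Real.rpow_nonneg hGnn _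
  constructor
  · have expand : (A ^ (p-1) - B ^ (p-1)) * (A - B)
        = A ^ (p-1) * A - A ^ (p-1) * B - B ^ (p-1) * A + B ^ (p-1) * B := by ring
    rw [expand]
    linarith
  · rcases le_total A B with h | h
    · have h1' : A ^ (p-1) ≤ B ^ (p-1) := Real.rpow_le_rpow hA0 h hps.le
      nlinarith
    · have h1' : B ^ (p-1) ≤ A ^ (p-1) := Real.rpow_le_rpow hB0 h hps.le
      nlinarith

end
end

section
/- For every nested sequence of bisection meshes {T_k} with discrete Crouzeix–Raviart first eigenpairs (μ_k, u_k) normalized by ‖u_k‖_{L^p(Ω)} = 1, the uniform bound μ_k^{1/p} = ‖u_k‖_{1,p,k} ≤ |ũ_k|_{1,p} ≤ |ũ_0|_{1,p} holds for all k ≥ 0, where ũ_k is the L^p-normalized minimizer of the Rayleigh quotient over the conforming piecewise-linear space V_k; in particular {μ_k}_{k≥0} and {‖u_k‖_{1,p,k}}_{k≥0} are bounded by a constant depending only on T_0. -/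
open MeasureTheory Metric Set Filter Topology
open scoped ENNReal RealInnerProductSpace Classical

noncomputable section

/-- The local element size `h_T = |T|^{1/d}`. -/
def elemSize {d : ℕ} (T : Set (Euc d)) : ℝ := (volume T).toReal ^ ((d : ℝ)⁻¹)

/-- The local face size `h_F = |F|^{1/(d-1)}` (w.r.t. `(d-1)`-dimensional Hausdorff
measure). -/
def faceSize {d : ℕ} (F : Set (Euc d)) : ℝ :=
  (μH[(d : ℝ) - 1] F).toReal ^ (((d : ℝ) - 1)⁻¹)

/-- A (regular) conforming simplicial triangulation of the closure of `Ω`, together with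
its face/element incidence data: each face `F` lies on the element `elemOfFace F`, and
each interior face also on the (distinct) element `elemOfFace' F`; the remaining faces
are contained in the boundary of `Ω`. -/
structure Mesh (d : ℕ) (Ω : Set (Euc d)) where
  elems : Finset (Set (Euc d))
  simplex : ∀ T ∈ elems, ∃ vtx : Fin (d + 1) → Euc d,
      AffineIndependent ℝ vtx ∧ T = convexHull ℝ (Set.range vtx)
  covers : ⋃₀ (elems : Set (Set (Euc d))) = closure Ω
  disjointInteriors : ∀ T₁ ∈ elems, ∀ T₂ ∈ elems, T₁ ≠ T₂ →
      interior T₁ ∩ interior T₂ = ∅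
  faces : Finset (Set (Euc d))
  interiorFaces : Finset (Set (Euc d))
  interiorFaces_subset : interiorFaces ⊆ faces
  elemOfFace : Set (Euc d) → Set (Euc d)
  elemOfFace' : Set (Euc d) → Set (Euc d)
  elemOfFace_mem : ∀ F ∈ faces, elemOfFace F ∈ elems ∧ F ⊆ elemOfFace F
  elemOfFace'_mem : ∀ F ∈ interiorFaces,
      elemOfFace' F ∈ elems ∧ F ⊆ elemOfFace' F ∧ elemOfFace' F ≠ elemOfFace F
  boundaryFace_subset : ∀ F ∈ faces, F ∉ interiorFaces → F ⊆ frontier Ω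

/-- The affine function agreeing with `v` on the interior of `T` (junk value if there is
none). -/
def affinePiece {d : ℕ} (v : Euc d → ℝ) (T : Set (Euc d)) : Euc d →ᵃ[ℝ] ℝ :=
  if h : ∃ A : Euc d →ᵃ[ℝ] ℝ, Set.EqOn v A (interior T) then h.choose else 0

/-- The jump `[v]` of a piecewise affine function `v` across a face `F`: the difference
of the two adjacent affine pieces for an interior face, and the trace itself for a
boundary face. -/
def jumpFn {d : ℕ} {Ω : Set (Euc d)} (M : Mesh d Ω) (v : Euc d → ℝ)
    (F : Set (Euc d)) : Euc d → ℝ :=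
  if F ∈ M.interiorFaces then
    fun x => affinePiece v (M.elemOfFace F) x - affinePiece v (M.elemOfFace' F) x
  else fun x => affinePiece v (M.elemOfFace F) x

/-- `‖[v]‖_{L^p(F)}^p`, the `p`-th power of the `L^p(F)`-norm of the jump of `v` across
the face `F`. -/
def jumpP {d : ℕ} {Ω : Set (Euc d)} (p : ℝ) (M : Mesh d Ω) (v : Euc d → ℝ)
    (F : Set (Euc d)) : ℝ :=
  ∫ x in F, |jumpFn M v F x| ^ p ∂(μH[(d : ℝ) - 1])

/-- Membership in the Crouzeix–Raviart space `V_T^CR`: `v` is piecewise affine and the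
jump of `v` across every face has vanishing mean. -/
def IsCR {d : ℕ} {Ω : Set (Euc d)} (M : Mesh d Ω) (v : Euc d → ℝ) : Prop :=
  (∀ T ∈ M.elems, Set.EqOn v (affinePiece v T) (interior T)) ∧
  ∀ F ∈ M.faces, ∫ x in F, jumpFn M v F x ∂(μH[(d : ℝ) - 1]) = 0

/-- The broken (elementwise) gradient `∇_T v` of a piecewise affine function. -/
def brokenGrad {d : ℕ} {Ω : Set (Euc d)} (M : Mesh d Ω) (v : Euc d → ℝ)
    (x : Euc d) : Euc d :=
  if h : ∃ T, T ∈ M.elems ∧ x ∈ interior T then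
    (InnerProductSpace.toDual ℝ (Euc d)).symm
      (LinearMap.toContinuousLinearMap (affinePiece v h.choose).linear)
  else 0

/-- `‖v‖_{1,p,T}^p`, the `p`-th power of the broken `W^{1,p}` norm. -/
def brokenNormP {d : ℕ} {Ω : Set (Euc d)} (p : ℝ) (M : Mesh d Ω) (v : Euc d → ℝ) : ℝ :=
  ∫ x in Ω, ‖brokenGrad M v x‖ ^ p

/-- `‖v‖_{L^p(Ω)}^p`. -/
def lpNormP {d : ℕ} (Ω : Set (Euc d)) (p : ℝ) (v : Euc d → ℝ) : ℝ :=
  ∫ x in Ω, |v x| ^ p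

/-- The broken Rayleigh quotient `J_T(v)`. -/
def rayleigh {d : ℕ} {Ω : Set (Euc d)} (p : ℝ) (M : Mesh d Ω) (v : Euc d → ℝ) : ℝ :=
  brokenNormP p M v / lpNormP Ω p v

/-- `(μ, u)` is a discrete first eigenpair of the Crouzeix–Raviart minimization problem:
`u` is an `L^p`-normalized CR function minimizing the broken Rayleigh quotient over
`V^CR \ {0}` and `μ` is the minimum value. -/
def IsDiscEigenpair {d : ℕ} {Ω : Set (Euc d)} (p : ℝ) (M : Mesh d Ω)
    (μ : ℝ) (u : Euc d → ℝ) : Prop :=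
  IsCR M u ∧ lpNormP Ω p u = 1 ∧ μ = brokenNormP p M u ∧
  ∀ v, IsCR M v → lpNormP Ω p v ≠ 0 → μ ≤ rayleigh p M v

/-- `M'` is a refinement of `M`. -/
def Refines {d : ℕ} {Ω : Set (Euc d)} (M' M : Mesh d Ω) : Prop :=
  ∀ T' ∈ M'.elems, ∃ T ∈ M.elems, T' ⊆ T

/-- Uniform shape regularity with parameter `ρ`. -/
def ShapeRegular {d : ℕ} {Ω : Set (Euc d)} (ρ : ℝ) (M : Mesh d Ω) : Prop :=
  ∀ T ∈ M.elems, ∃ x : Euc d, Metric.ball x (ρ * Metric.diam T) ⊆ T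

/-- A nested, uniformly shape-regular sequence of conforming meshes, as produced by
successive bisection refinements of the initial mesh `T_0 = M 0`. -/
def AdmissibleSeq {d : ℕ} {Ω : Set (Euc d)} (M : ℕ → Mesh d Ω) : Prop :=
  (∀ k, Refines (M (k + 1)) (M k)) ∧ ∃ ρ > 0, ∀ k, ShapeRegular ρ (M k)

/-- Smooth compactly supported test functions on `Ω`. -/
def TestFun {d : ℕ} (Ω : Set (Euc d)) (φ : Euc d → ℝ) : Prop :=
  ContDiff ℝ (⊤ : ℕ∞) φ ∧ HasCompactSupport φ ∧ tsupport φ ⊆ Ω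

/-- `G` is the weak (distributional) gradient of `v` on `Ω`. -/
def HasWeakGrad {d : ℕ} (Ω : Set (Euc d)) (v : Euc d → ℝ) (G : Euc d → Euc d) : Prop :=
  ∀ φ, TestFun Ω φ → ∀ y : Euc d,
    ∫ x in Ω, v x * (fderiv ℝ φ x y) = - ∫ x in Ω, ⟪G x, y⟫ * φ x

/-- Membership in `W_0^{1,p}(Ω)` with weak gradient `G`: `v` lies in the closure of the
test functions in the `W^{1,p}`-norm. -/
def MemW01p {d : ℕ} (Ω : Set (Euc d)) (p : ℝ) (v : Euc d → ℝ)
    (G : Euc d → Euc d) : Prop :=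
  HasWeakGrad Ω v G ∧
  ∀ ε > 0, ∃ φ, TestFun Ω φ ∧
    (∫ x in Ω, |v x - φ x| ^ p) + (∫ x in Ω, ‖G x - gradient φ x‖ ^ p) < ε


/-- Membership in the conforming `P1` space `V_k ⊂ W_0^{1,p}(Ω)`. -/
def IsConformingP1 {d : ℕ} {Ω : Set (Euc d)} (M : Mesh d Ω) (v : Euc d → ℝ) : Prop :=
  (∀ T ∈ M.elems, ∃ A : Euc d →ᵃ[ℝ] ℝ, Set.EqOn v A T) ∧
  ContinuousOn v (closure Ω) ∧ ∀ x ∈ frontier Ω, v x = 0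

/-- Two affine maps agreeing on a nonempty open set are equal. -/
lemma affine_eq_of_eqOn_open {d : ℕ} {A B : Euc d →ᵃ[ℝ] ℝ} {s : Set (Euc d)}
    (hs : IsOpen s) (hne : s.Nonempty) (h : Set.EqOn A B s) : A = B := by
  obtain ⟨x₀, hx₀⟩ := hne
  obtain ⟨ε, hε, hball⟩ := Metric.isOpen_iff.mp hs x₀ hx₀
  have hAB0 : A x₀ = B x₀ := h hx₀
  have hlin : A.linear = B.linear := by
    apply LinearMap.ext
    intro v
    rcases eq_or_ne v 0 with rfl | hv
    · simp
    · have hv0 : (0 : ℝ) < ‖v‖ := norm_pos_iff.mpr hv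
      set c : ℝ := ε / (2 * ‖v‖) with hc
      have hc0 : 0 < c := div_pos hε (by positivity)
      have hmem : c • v +ᵥ x₀ ∈ s := by
        apply hball
        have : dist (c • v +ᵥ x₀) x₀ = ‖c • v‖ := by
          rw [dist_eq_norm]
          simp [vadd_eq_add]
        rw [Metric.mem_ball, this, norm_smul, Real.norm_eq_abs, abs_of_pos hc0, hc]
        rw [div_mul_eq_mul_div, mul_comm (2 : ℝ) ‖v‖, ← div_div, mul_div_assoc,
          div_self hv0.ne']
        linarith
      have h1 : A (c • v +ᵥ x₀) = B (c • v +ᵥ x₀) := h hmem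
      rw [A.map_vadd, B.map_vadd] at h1
      have h2 : A.linear (c • v) = B.linear (c • v) := by
        have : A.linear (c • v) +ᵥ A x₀ = B.linear (c • v) +ᵥ B x₀ := h1
        rw [hAB0] at this
        exact vadd_right_cancel _ this
      rw [A.linear.map_smul, B.linear.map_smul] at h2
      exact smul_right_injective ℝ hc0.ne' h2
  ext y
  have h1 : A ((y - x₀) +ᵥ x₀) = B ((y - x₀) +ᵥ x₀) := by
    rw [A.map_vadd, B.map_vadd, hlin, hAB0]
  have h2 : (y - x₀) +ᵥ x₀ = y := by simp [vadd_eq_add]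
  rwa [h2] at h1

/-- Elements of a mesh have nonempty interior. -/
lemma elem_interior_nonempty {d : ℕ} {Ω : Set (Euc d)} (M : Mesh d Ω) {T : Set (Euc d)}
    (hT : T ∈ M.elems) : (interior T).Nonempty := by
  obtain ⟨vtx, hind, rfl⟩ := M.simplex T hT
  rw [(convex_convexHull ℝ _).interior_nonempty_iff_affineSpan_eq_top, affineSpan_convexHull,
    hind.affineSpan_eq_top_iff_card_eq_finrank_add_one]
  simp [finrank_euclideanSpace_fin]

lemma affinePiece_eqOn {d : ℕ} {v : Euc d → ℝ} {T : Set (Euc d)}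
    (h : ∃ A : Euc d →ᵃ[ℝ] ℝ, Set.EqOn v A (interior T)) :
    Set.EqOn v (affinePiece v T) (interior T) := by
  rw [affinePiece, dif_pos h]
  exact h.choose_spec

/-- If `v` agrees with the affine map `A` on all of `T` and `T` has nonempty interior,
then `affinePiece v T = A`. -/
lemma affinePiece_eq {d : ℕ} {v : Euc d → ℝ} {A : Euc d →ᵃ[ℝ] ℝ} {T : Set (Euc d)}
    (hne : (interior T).Nonempty) (hA : Set.EqOn v A T) : affinePiece v T = A := by
  have hex : ∃ B : Euc d →ᵃ[ℝ] ℝ, Set.EqOn v B (interior T) :=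
    ⟨A, fun x hx => hA (interior_subset hx)⟩
  have h1 := affinePiece_eqOn hex
  exact affine_eq_of_eqOn_open isOpen_interior hne
    (fun x hx => ((h1 hx).symm.trans (hA (interior_subset hx))))

/-- A conforming `P1` function belongs to the Crouzeix–Raviart space. -/
lemma conforming_isCR {d : ℕ} {Ω : Set (Euc d)} (M : Mesh d Ω) {v : Euc d → ℝ}
    (hv : IsConformingP1 M v) : IsCR M v := by
  obtain ⟨haff, hcont, hbd⟩ := hv
  have key : ∀ T ∈ M.elems, Set.EqOn v (affinePiece v T) T := by
    intro T hT
    obtain ⟨A, hA⟩ := haff T hT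
    rw [affinePiece_eq (elem_interior_nonempty M hT) hA]
    exact hA
  constructor
  · intro T hT x hx
    exact key T hT (interior_subset hx)
  · intro F hF
    apply MeasureTheory.setIntegral_eq_zero_of_forall_eq_zero
    intro x hx
    by_cases hFi : F ∈ M.interiorFaces
    · simp only [jumpFn, if_pos hFi]
      obtain ⟨hT1, hF1⟩ := M.elemOfFace_mem F hF
      obtain ⟨hT2, hF2, _⟩ := M.elemOfFace'_mem F hFi
      rw [← key _ hT1 (hF1 hx), ← key _ hT2 (hF2 hx), sub_self]
    · simp only [jumpFn, if_neg hFi]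
      obtain ⟨hT1, hF1⟩ := M.elemOfFace_mem F hF
      rw [← key _ hT1 (hF1 hx)]
      exact hbd x (M.boundaryFace_subset F hF hFi hx)

/-- The broken gradient of a function which is piecewise affine with respect to the
coarse mesh is, at interior points of fine elements, given by the coarse piece. -/
lemma brokenGrad_refine {d : ℕ} {Ω : Set (Euc d)} {Mf Mc : Mesh d Ω}
    (href : Refines Mf Mc) {v : Euc d → ℝ}
    (hv : ∀ T ∈ Mc.elems, ∃ A : Euc d →ᵃ[ℝ] ℝ, Set.EqOn v A T)
    {x : Euc d} (hx : ∃ T, T ∈ Mf.elems ∧ x ∈ interior T) :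
    brokenGrad Mf v x = brokenGrad Mc v x := by
  obtain ⟨hTf_mem, hxTf⟩ := hx.choose_spec
  obtain ⟨Tc, hTc, hsub⟩ := href hx.choose hTf_mem
  have hxc : x ∈ interior Tc := interior_mono hsub hxTf
  have hx' : ∃ T, T ∈ Mc.elems ∧ x ∈ interior T := ⟨Tc, hTc, hxc⟩
  obtain ⟨hTc'_mem, hxTc'⟩ := hx'.choose_spec
  have hTceq : hx'.choose = Tc := by
    by_contra hne
    exact Set.eq_empty_iff_forall_notMem.mp
      (Mc.disjointInteriors _ hTc'_mem _ hTc hne) x ⟨hxTc', hxc⟩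
  obtain ⟨A, hA⟩ := hv Tc hTc
  have h1 : affinePiece v hx.choose = A :=
    affinePiece_eq (elem_interior_nonempty Mf hTf_mem) (fun y hy => hA (hsub hy))
  have h2 : affinePiece v hx'.choose = A := by
    rw [hTceq]
    exact affinePiece_eq (elem_interior_nonempty Mc hTc) hA
  simp only [brokenGrad, dif_pos hx, dif_pos hx', h1, h2]

/-- The broken `W^{1,p}` seminorm of a coarse piecewise affine function does not change
under refinement. -/
lemma brokenNormP_refine {d : ℕ} {Ω : Set (Euc d)} (hΩo : IsOpen Ω)
    {Mf Mc : Mesh d Ω} (href : Refines Mf Mc) {v : Euc d → ℝ}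
    (hv : ∀ T ∈ Mc.elems, ∃ A : Euc d →ᵃ[ℝ] ℝ, Set.EqOn v A T) (p : ℝ) :
    brokenNormP p Mf v = brokenNormP p Mc v := by
  unfold brokenNormP
  apply MeasureTheory.setIntegral_congr_ae hΩo.measurableSet
  have hnull : volume (⋃ T ∈ (Mf.elems : Set (Set (Euc d))), frontier T) = 0 := by
    rw [measure_biUnion_null_iff Mf.elems.countable_toSet]
    intro T hT
    obtain ⟨vtx, hind, rfl⟩ := Mf.simplex T hT
    exact (convex_convexHull ℝ _).addHaar_frontier volume
  filter_upwards [measure_eq_zero_iff_ae_notMem.mp hnull] with x hxN hxΩ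
  have hxcl : x ∈ ⋃₀ (Mf.elems : Set (Set (Euc d))) := by
    rw [Mf.covers]
    exact subset_closure hxΩ
  obtain ⟨T, hT, hxT⟩ := hxcl
  have hTcl : IsClosed T := by
    obtain ⟨vtx, hind, rfl⟩ := Mf.simplex T hT
    exact ((Set.finite_range vtx).isCompact_convexHull ℝ).isClosed
  have hxint : x ∈ interior T := by
    by_contra hni
    exact hxN (Set.mem_biUnion (Finset.mem_coe.mpr hT) (by rw [hTcl.frontier_eq]; exact ⟨hxT, hni⟩))
  rw [brokenGrad_refine href hv ⟨T, hT, hxint⟩]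

/-- For every nested sequence of bisection meshes `{T_k}` with
discrete Crouzeix–Raviart first eigenpairs `(μ_k, u_k)` normalized by
`‖u_k‖_{L^p(Ω)} = 1`, the uniform bound
`μ_k^{1/p} = ‖u_k‖_{1,p,k} ≤ |ũ_k|_{1,p} ≤ |ũ_0|_{1,p}` holds for all `k ≥ 0`, where
`ũ_k` is the `L^p`-normalized minimizer of the Rayleigh quotient over the conforming
piecewise-linear space `V_k`; in particular `{μ_k}` and `{‖u_k‖_{1,p,k}}` are bounded by
a constant depending only on `T_0` (namely `|ũ_0|_{1,p}^p`). -/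
theorem stmt15 {d : ℕ} (hd : d = 2 ∨ d = 3) {p : ℝ} (hp : 1 < p)
    {Ω : Set (Euc d)} (hΩo : IsOpen Ω) (hΩb : Bornology.IsBounded Ω)
    (hΩc : IsConnected Ω)
    (M : ℕ → Mesh d Ω) (hM : AdmissibleSeq M)
    (μ : ℕ → ℝ) (u : ℕ → Euc d → ℝ)
    (heig : ∀ k, IsDiscEigenpair p (M k) (μ k) (u k))
    (ut : ℕ → Euc d → ℝ)
    (hconf : ∀ k, IsConformingP1 (M k) (ut k) ∧ lpNormP Ω p (ut k) = 1 ∧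
      ∀ v, IsConformingP1 (M k) v → lpNormP Ω p v ≠ 0 →
        rayleigh p (M k) (ut k) ≤ rayleigh p (M k) v) :
    (∀ k, μ k ^ p⁻¹ = brokenNormP p (M k) (u k) ^ p⁻¹ ∧
      brokenNormP p (M k) (u k) ^ p⁻¹ ≤ brokenNormP p (M k) (ut k) ^ p⁻¹ ∧
      brokenNormP p (M k) (ut k) ^ p⁻¹ ≤ brokenNormP p (M 0) (ut 0) ^ p⁻¹) ∧
    ∀ k, μ k ≤ brokenNormP p (M 0) (ut 0) ∧
      brokenNormP p (M k) (u k) ≤ brokenNormP p (M 0) (ut 0) := by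
  obtain ⟨hnest, ρ, hρ, hreg⟩ := hM
  have hrefl : ∀ k, Refines (M k) (M 0) := by
    intro k
    induction k with
    | zero => exact fun T hT => ⟨T, hT, subset_rfl⟩
    | succ n ih =>
      intro T hT
      obtain ⟨T', hT', hsub⟩ := hnest n T hT
      obtain ⟨T0, hT0, hsub0⟩ := ih T' hT'
      exact ⟨T0, hT0, hsub.trans hsub0⟩
  have hbase : ∀ k, μ k = brokenNormP p (M k) (u k) ∧
      brokenNormP p (M k) (u k) ≤ brokenNormP p (M k) (ut k) ∧
      brokenNormP p (M k) (ut k) ≤ brokenNormP p (M 0) (ut 0) := by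
    intro k
    obtain ⟨hCRu, hnormu, hμ, hmin⟩ := heig k
    obtain ⟨hconfk, hnormk, hmink⟩ := hconf k
    obtain ⟨hconf0, hnorm0, _⟩ := hconf 0
    have hCRut : IsCR (M k) (ut k) := conforming_isCR (M k) hconfk
    have h1 : brokenNormP p (M k) (u k) ≤ brokenNormP p (M k) (ut k) := by
      have h := hmin (ut k) hCRut (by rw [hnormk]; exact one_ne_zero)
      unfold rayleigh at h
      rwa [hnormk, div_one, hμ] at h
    have hconf0k : IsConformingP1 (M k) (ut 0) := by
      refine ⟨?_, hconf0.2.1, hconf0.2.2⟩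
      intro T hT
      obtain ⟨T0, hT0, hsub⟩ := hrefl k T hT
      obtain ⟨A, hA⟩ := hconf0.1 T0 hT0
      exact ⟨A, fun x hx => hA (hsub hx)⟩
    have h2 : brokenNormP p (M k) (ut k) ≤ brokenNormP p (M k) (ut 0) := by
      have h := hmink (ut 0) hconf0k (by rw [hnorm0]; exact one_ne_zero)
      unfold rayleigh at h
      rwa [hnormk, hnorm0, div_one, div_one] at h
    have h3 : brokenNormP p (M k) (ut 0) = brokenNormP p (M 0) (ut 0) :=
      brokenNormP_refine hΩo (hrefl k) hconf0.1 p
    exact ⟨hμ, h1, h2.trans h3.le⟩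
  have hnn : ∀ (k : ℕ) (w : Euc d → ℝ), 0 ≤ brokenNormP p (M k) w := fun k w =>
    MeasureTheory.integral_nonneg fun x => Real.rpow_nonneg (norm_nonneg _) p
  constructor
  · intro k
    obtain ⟨e1, e2, e3⟩ := hbase k
    exact ⟨by rw [e1],
      Real.rpow_le_rpow (hnn k (u k)) e2 (by positivity),
      Real.rpow_le_rpow (hnn k (ut k)) e3 (by positivity)⟩
  · intro k
    obtain ⟨e1, e2, e3⟩ := hbase k
    exact ⟨by rw [e1]; exact e2.trans e3, e2.trans e3⟩

end
end
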